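/- arXiv:1709.01397 — 2 statements merged into one kernel-verified Lean document; each statement's English description precedes it below -/
import Mathlib

section
/- Let ℝ³ carry a norm ‖·‖ whose norm function is differentiable at every nonzero point. Let F : ℝ² → ℝ³ be a differentiable map, x₀ ∈ ℝ², and let T ⊆ ℝ³ be the range of the differential dF_{x₀}. Let a ∈ ℝ³ with a ≠ F(x₀), and define the distance function D_a : ℝ² → ℝ by D_a(x) = ‖F(x) − a‖. Then x₀ is a critical point of D_a (i.e., the differential of D_a at x₀ vanishes) if and only if the vector F(x₀) − a is Birkhoff orthogonal to T, that is, ‖F(x₀) − a + w‖ ≥ ‖F(x₀) − a‖ for every w ∈ T. -/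
open Module

/-- Section 3 of the paper: let `X` be a three-dimensional real normed space whose norm
is differentiable at every nonzero point, `F : ℝ² → X` a differentiable map, `x₀ ∈ ℝ²`,
`T` the range of the differential of `F` at `x₀`, and `a ≠ F x₀`.  Then `x₀` is a
critical point of the distance function `D_a x = ‖F x - a‖` if and only if
`F x₀ - a` is Birkhoff orthogonal to `T`. -/
theorem critical_point_of_distance_iff_birkhoff_orthogonal
    (X : Type*) [NormedAddCommGroup X] [NormedSpace ℝ X] [FiniteDimensional ℝ X]
    (hdim : finrank ℝ X = 3)
    (hnorm : ∀ v : X, v ≠ 0 → DifferentiableAt ℝ (fun w : X => ‖w‖) v)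
    (F : EuclideanSpace ℝ (Fin 2) → X)
    (x₀ : EuclideanSpace ℝ (Fin 2))
    (hF : Differentiable ℝ F)
    (a : X) (ha : a ≠ F x₀) :
    fderiv ℝ (fun x => ‖F x - a‖) x₀ = 0 ↔
      ∀ w ∈ LinearMap.range (fderiv ℝ F x₀ : EuclideanSpace ℝ (Fin 2) →ₗ[ℝ] X), ‖F x₀ - a + w‖ ≥ ‖F x₀ - a‖ := by
  set v : X := F x₀ - a with hv_def
  have hv : v ≠ 0 := sub_ne_zero.2 (Ne.symm ha)
  set f : X →L[ℝ] ℝ := fderiv ℝ (fun w : X => ‖w‖) v with hf_def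
  have hf : HasFDerivAt (fun w : X => ‖w‖) f v := (hnorm v hv).hasFDerivAt
  set dF : EuclideanSpace ℝ (Fin 2) →L[ℝ] X := fderiv ℝ F x₀ with hdF_def
  have hG : HasFDerivAt (fun x => F x - a) dF x₀ := (hF x₀).hasFDerivAt.sub_const a
  have hD : HasFDerivAt (fun x => ‖F x - a‖) (f.comp dF) x₀ := hf.comp x₀ hG
  have hDeq : fderiv ℝ (fun x => ‖F x - a‖) x₀ = f.comp dF := hD.fderiv
  -- f v = ‖v‖
  have hfv : f v = ‖v‖ := by
    have hline : HasDerivAt (fun t : ℝ => t • v) v 1 := by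
      simpa using (hasDerivAt_id (1 : ℝ)).smul_const v
    have h1 : HasDerivAt (fun t : ℝ => ‖t • v‖) (f v) 1 := by
      have hf' : HasFDerivAt (fun w : X => ‖w‖) f ((1:ℝ) • v) := by
        rw [one_smul]; exact hf
      exact hf'.comp_hasDerivAt 1 hline
    have h2 : HasDerivAt (fun t : ℝ => ‖t • v‖) ‖v‖ 1 := by
      have hmul : HasDerivAt (fun t : ℝ => t * ‖v‖) ‖v‖ 1 := by
        simpa using (hasDerivAt_id (1 : ℝ)).mul_const ‖v‖
      apply hmul.congr_of_eventuallyEq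
      filter_upwards [eventually_gt_nhds (show (0:ℝ) < 1 by norm_num)] with t ht
      rw [norm_smul, Real.norm_eq_abs, abs_of_pos ht]
    exact h1.unique h2
  -- |f u| ≤ ‖u‖
  have hfle : ∀ u : X, f u ≤ ‖u‖ := by
    intro u
    have hnf : ‖f‖ ≤ 1 := hf.le_of_lipschitz lipschitzWith_one_norm
    calc f u ≤ |f u| := le_abs_self _
      _ ≤ ‖f‖ * ‖u‖ := by simpa using f.le_opNorm u
      _ ≤ 1 * ‖u‖ := by gcongr
      _ = ‖u‖ := one_mul _
  rw [hDeq]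
  constructor
  · intro h w hw
    obtain ⟨u, rfl⟩ := hw
    have hfw : f (dF u) = 0 := by
      have := congrFun (congrArg DFunLike.coe h) u
      simpa using this
    calc ‖v‖ = f v + f (dF u) := by rw [hfw, hfv]; ring
      _ = f (v + dF u) := (f.map_add v (dF u)).symm
      _ ≤ ‖v + dF u‖ := hfle _
  · intro h
    ext u
    have hw : dF u ∈ LinearMap.range (dF : EuclideanSpace ℝ (Fin 2) →ₗ[ℝ] X) := ⟨u, rfl⟩
    -- φ t = ‖v + t • dF u‖ has a local min at 0
    have hline : HasDerivAt (fun t : ℝ => v + t • dF u) (dF u) 0 := by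
      simpa using ((hasDerivAt_id (0 : ℝ)).smul_const (dF u)).const_add v
    have hφ : HasDerivAt (fun t : ℝ => ‖v + t • dF u‖) (f (dF u)) 0 := by
      have hf' : HasFDerivAt (fun w : X => ‖w‖) f (v + (0:ℝ) • dF u) := by
        rw [zero_smul, add_zero]; exact hf
      exact hf'.comp_hasDerivAt 0 hline
    have hmin : IsLocalMin (fun t : ℝ => ‖v + t • dF u‖) 0 := by
      apply Filter.Eventually.of_forall
      intro t
      have : t • dF u ∈ LinearMap.range (dF : EuclideanSpace ℝ (Fin 2) →ₗ[ℝ] X) :=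
        Submodule.smul_mem _ t hw
      simpa using h _ this
    have := hmin.hasDerivAt_eq_zero hφ
    simpa using this
end

section
/- Let g : ℝ → ℝ be a twice differentiable function with g(θ) > 0 for all θ, satisfying the Ermakov–Pinney equation g''(θ) + g(θ) = g(θ)⁻³ for all θ ∈ ℝ. Then there exist real constants A, B, C with A·C − B² = 1 such that g(θ)² = A·cos²θ + 2B·cosθ·sinθ + C·sin²θ for all θ; in particular g is π-periodic, g² is the restriction to the unit circle directions of a positive definite quadratic form of determinant 1 (so g is the Euclidean support function of an origin-centered ellipse enclosing area π), and the only constant such solution is g ≡ 1. (This is the analytic core of Theorem 4.1: the Euclidean support function g of the unit circle of a normed plane whose Birkhoff normal field makes it a Blaschke immersion is a positive π-periodic solution of g'' + g = g⁻³, which forces the unit circle to be an ellipse, i.e., the plane to be Euclidean.) -/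
open Real

/-- The analytic core of Theorem 4.1: a positive twice differentiable solution of the
Ermakov–Pinney equation `g'' + g = g⁻³` satisfies
`g(θ)² = A cos²θ + 2B cosθ sinθ + C sin²θ` for constants with `A·C - B² = 1`
(so `g²` comes from a positive definite quadratic form of determinant 1, and `g` is the
Euclidean support function of an origin-centered ellipse enclosing area `π`); in
particular `g` is `π`-periodic, and the only constant such solution is `g ≡ 1`. -/
theorem ermakov_pinney_solutions (g : ℝ → ℝ)
    (hg : Differentiable ℝ g) (hg' : Differentiable ℝ (deriv g))
    (hpos : ∀ θ : ℝ, g θ > 0)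
    (heq : ∀ θ : ℝ, deriv (deriv g) θ + g θ = 1 / (g θ) ^ 3) :
    ∃ A B C : ℝ, A * C - B ^ 2 = 1 ∧
      (∀ θ : ℝ, (g θ) ^ 2 =
        A * Real.cos θ ^ 2 + 2 * B * Real.cos θ * Real.sin θ + C * Real.sin θ ^ 2) ∧
      (∀ θ : ℝ, g (θ + π) = g θ) ∧
      ((∃ c : ℝ, ∀ θ : ℝ, g θ = c) → ∀ θ : ℝ, g θ = 1) := by
  have hgne : ∀ θ, g θ ≠ 0 := fun θ => (hpos θ).ne'
  have hG2 : ∀ θ, deriv (deriv g) θ = 1 / (g θ) ^ 3 - g θ := fun θ => by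
    have := heq θ; linarith
  set h : ℝ → ℝ := fun t => g t ^ 2 with hh
  set h1 : ℝ → ℝ := fun t => 2 * g t * deriv g t with hh1
  set h2 : ℝ → ℝ := fun t => 2 * (deriv g t) ^ 2 + 2 * ((g t) ^ 2)⁻¹ - 2 * (g t) ^ 2 with hh2
  have hHasH : ∀ θ, HasDerivAt h (h1 θ) θ := by
    intro θ
    have := (hg θ).hasDerivAt.pow 2
    refine this.congr_deriv ?_
    simp [hh1]
  have hHasH1 : ∀ θ, HasDerivAt h1 (h2 θ) θ := by
    intro θ
    have := ((hg θ).hasDerivAt.const_mul 2).mul (hg' θ).hasDerivAt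
    refine this.congr_deriv ?_
    rw [hh2, hG2 θ]
    field_simp [hgne θ]
    ring
  have hHasH2 : ∀ θ, HasDerivAt h2 (-4 * h1 θ) θ := by
    intro θ
    have p1 := ((hg' θ).hasDerivAt.pow 2).const_mul 2
    have p2 := (((hg θ).hasDerivAt.pow 2).inv (pow_ne_zero 2 (hgne θ))).const_mul 2
    have p3 := ((hg θ).hasDerivAt.pow 2).const_mul 2
    have := (p1.add p2).sub p3
    refine this.congr_deriv ?_
    rw [hG2 θ]
    simp only [hh1, Pi.pow_apply]
    field_simp [hgne θ]
    ring
  set k : ℝ → ℝ := fun t => h2 t + 4 * h t with hk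
  have hHasK : ∀ θ, HasDerivAt k 0 θ := by
    intro θ
    have := (hHasH2 θ).add ((hHasH θ).const_mul 4)
    refine this.congr_deriv ?_
    simp [hh1]
  have hKconst : ∀ θ, k θ = k 0 := fun θ =>
    is_const_of_deriv_eq_zero (fun t => (hHasK t).differentiableAt)
      (fun t => (hHasK t).deriv) θ 0
  set K : ℝ := k 0 with hK
  set a : ℝ := h 0 - K / 4 with ha
  set b : ℝ := h1 0 / 2 with hb
  set f : ℝ → ℝ := fun t => K / 4 + a * Real.cos (2 * t) + b * Real.sin (2 * t) with hf
  set f1 : ℝ → ℝ := fun t => (-2 * a) * Real.sin (2 * t) + (2 * b) * Real.cos (2 * t) with hf1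
  have hid : ∀ θ : ℝ, HasDerivAt (fun t : ℝ => 2 * t) 2 θ := by
    intro θ
    simpa using (hasDerivAt_id θ).const_mul 2
  have hHasF : ∀ θ, HasDerivAt f (f1 θ) θ := by
    intro θ
    have := ((hasDerivAt_const θ (K / 4)).add (((hid θ).cos).const_mul a)).add
      (((hid θ).sin).const_mul b)
    refine this.congr_deriv ?_
    simp [hf1]; ring
  have hHasF1 : ∀ θ, HasDerivAt f1 (K - 4 * f θ) θ := by
    intro θ
    have := (((hid θ).sin).const_mul (-2 * a)).add (((hid θ).cos).const_mul (2 * b))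
    refine this.congr_deriv ?_
    simp [hf]; ring
  set φ : ℝ → ℝ := fun t => h t - f t with hφ
  set φ1 : ℝ → ℝ := fun t => h1 t - f1 t with hφ1
  have hHasφ : ∀ θ, HasDerivAt φ (φ1 θ) θ := fun θ => (hHasH θ).sub (hHasF θ)
  have hHasφ1 : ∀ θ, HasDerivAt φ1 (-4 * φ θ) θ := by
    intro θ
    have := (hHasH1 θ).sub (hHasF1 θ)
    refine this.congr_deriv ?_
    have hkθ : h2 θ + 4 * h θ = K := hKconst θ
    simp only [hφ]
    linarith
  set E : ℝ → ℝ := fun t => φ1 t ^ 2 + 4 * φ t ^ 2 with hE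
  have hHasE : ∀ θ, HasDerivAt E 0 θ := by
    intro θ
    have := ((hHasφ1 θ).pow 2).add (((hHasφ θ).pow 2).const_mul 4)
    refine this.congr_deriv ?_
    simp; ring
  have hEconst : ∀ θ, E θ = E 0 := fun θ =>
    is_const_of_deriv_eq_zero (fun t => (hHasE t).differentiableAt)
      (fun t => (hHasE t).deriv) θ 0
  have hφ0 : φ 0 = 0 := by simp [hφ, hf, ha]
  have hφ10 : φ1 0 = 0 := by simp only [hφ1, hf1, hb]; simp; ring
  have hE0 : E 0 = 0 := by simp [hE, hφ0, hφ10]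
  have hφzero : ∀ θ, φ θ = 0 := by
    intro θ
    have h1' := hEconst θ
    rw [hE0] at h1'
    simp only [hE] at h1'
    nlinarith [sq_nonneg (φ1 θ), sq_nonneg (φ θ)]
  have hmain : ∀ θ, g θ ^ 2 = K / 4 + a * Real.cos (2 * θ) + b * Real.sin (2 * θ) := by
    intro θ
    have := hφzero θ
    simp only [hφ, hf, hh] at this
    linarith
  refine ⟨K / 4 + a, b, K / 4 - a, ?_, ?_, ?_, ?_⟩
  · -- determinant condition
    have hK0 : K = 2 * (deriv g 0) ^ 2 + 2 * ((g 0) ^ 2)⁻¹ - 2 * (g 0) ^ 2 + 4 * g 0 ^ 2 := rfl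
    have ha0 : a = g 0 ^ 2 - K / 4 := rfl
    have hb0 : b = 2 * g 0 * deriv g 0 / 2 := rfl
    rw [hK0] at ha0 ⊢
    rw [ha0, hb0]
    have := hgne 0
    field_simp
    ring
  · -- quadratic form identity
    intro θ
    have h1' := hmain θ
    rw [Real.cos_two_mul, Real.sin_two_mul] at h1'
    have h2' := Real.sin_sq_add_cos_sq θ
    linear_combination h1' + (a - K / 4) * h2'
  · -- π-periodicity
    intro θ
    have e1 := hmain (θ + π)
    have e2 := hmain θ
    have hc : Real.cos (2 * (θ + π)) = Real.cos (2 * θ) := by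
      rw [show 2 * (θ + π) = 2 * θ + 2 * π by ring, Real.cos_add_two_pi]
    have hs : Real.sin (2 * (θ + π)) = Real.sin (2 * θ) := by
      rw [show 2 * (θ + π) = 2 * θ + 2 * π by ring, Real.sin_add_two_pi]
    rw [hc, hs] at e1
    have hsq : g (θ + π) ^ 2 = g θ ^ 2 := by rw [e1, e2]
    have hz : (g (θ + π) - g θ) * (g (θ + π) + g θ) = 0 := by linear_combination hsq
    rcases mul_eq_zero.mp hz with hz | hz
    · linarith
    · exfalso; have := hpos (θ + π); have := hpos θ; linarith
  · -- constant solutions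
    rintro ⟨c, hc⟩ θ
    have hgc : g = fun _ => c := funext hc
    have hd1 : deriv g = fun _ => (0 : ℝ) := by rw [hgc]; funext t; simp
    have hd2 : deriv (deriv g) 0 = 0 := by rw [hd1]; simp
    have hcpos : 0 < c := by rw [← hc θ]; exact hpos θ
    have he := heq 0
    rw [hd2, hgc] at he
    simp only at he
    have hc4 : c ^ 4 = 1 := by
      have hne : c ≠ 0 := hcpos.ne'
      field_simp at he
      linarith
    have hfac : (c - 1) * (c ^ 3 + c ^ 2 + c + 1) = 0 := by linear_combination hc4
    rcases mul_eq_zero.mp hfac with hz | hz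
    · rw [hc θ]; linarith
    · exfalso; nlinarith
end
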